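/- arXiv:1505.04927 — 5 statements merged into one kernel-verified Lean document; each statement's English description precedes it below -/
import Mathlib

section
/- Let n ∈ ℕ, let ω be a random vector in ℝ^n, and let γ > 1 and C₁, C₂ ∈ (0,∞). Suppose that for every convex 1-Lipschitz function f : ℝ^n → ℝ and every median M_f of f(ω) one has P(|f(ω) − M_f| ≥ t) ≤ C₁ exp(−t^γ/C₂) for all t ≥ 0. Then, with C₁' := C₁² and C₂' := 2^{γ−1} C₂, for every convex set A ⊆ ℝ^n and every t ≥ 0 one has P(ω ∈ A) · P(d(ω, A) > t) ≤ C₁' exp(−t^γ/C₂'). -/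
open MeasureTheory Metric Filter
open scoped ENNReal

/-- Existence of a median for a measurable real function on a probability space. -/
lemma exists_median_aux {Ω : Type*} [MeasurableSpace Ω] (P : Measure Ω) [IsProbabilityMeasure P]
    (g : Ω → ℝ) (hg : Measurable g) :
    ∃ M : ℝ, (1/2 : ℝ≥0∞) ≤ P {x | M ≤ g x} ∧ (1/2 : ℝ≥0∞) ≤ P {x | g x ≤ M} := by
  set S : Set ℝ := {m | (1/2 : ℝ≥0∞) ≤ P {x | g x ≤ m}} with hSdef
  have hmono : ∀ {m m' : ℝ}, m ≤ m' → m ∈ S → m' ∈ S := by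
    intro m m' h hm
    exact le_trans hm (measure_mono fun x hx => le_trans hx h)
  have half_lt_one : (1/2 : ℝ≥0∞) < 1 := ENNReal.half_lt_self one_ne_zero ENNReal.one_ne_top
  -- S is nonempty
  have hne : S.Nonempty := by
    have hmon : Monotone (fun n : ℕ => {x | g x ≤ (n:ℝ)}) := by
      intro n m hnm x hx
      simp only [Set.mem_setOf_eq] at hx ⊢
      have : (n:ℝ) ≤ (m:ℝ) := by exact_mod_cast hnm
      linarith
    have h1 := tendsto_measure_iUnion_atTop (μ := P) hmon
    have hU : (⋃ n : ℕ, {x | g x ≤ (n:ℝ)}) = Set.univ := by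
      apply Set.eq_univ_of_forall
      intro x
      obtain ⟨n, hn⟩ := exists_nat_ge (g x)
      exact Set.mem_iUnion.2 ⟨n, hn⟩
    rw [hU, measure_univ] at h1
    obtain ⟨n, hn⟩ := (h1.eventually (eventually_ge_nhds half_lt_one)).exists
    exact ⟨(n:ℝ), hn⟩
  -- S is bounded below
  have hbdd : BddBelow S := by
    have hanti : Antitone (fun n : ℕ => {x | g x ≤ -(n:ℝ)}) := by
      intro n m hnm x hx
      simp only [Set.mem_setOf_eq] at hx ⊢
      have : (n:ℝ) ≤ (m:ℝ) := by exact_mod_cast hnm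
      linarith
    have h2 := tendsto_measure_iInter_atTop (μ := P) (s := fun n : ℕ => {x | g x ≤ -(n:ℝ)})
      (fun n => (hg measurableSet_Iic).nullMeasurableSet) hanti ⟨0, measure_ne_top _ _⟩
    have hI : (⋂ n : ℕ, {x | g x ≤ -(n:ℝ)}) = (∅ : Set Ω) := by
      rw [Set.eq_empty_iff_forall_notMem]
      intro x hx
      obtain ⟨n, hn⟩ := exists_nat_gt (-(g x))
      have := Set.mem_iInter.1 hx n
      simp only [Set.mem_setOf_eq] at this
      linarith
    rw [hI, measure_empty] at h2
    obtain ⟨N, hN⟩ := (h2.eventually (eventually_lt_nhds (ENNReal.half_pos one_ne_zero : (0:ℝ≥0∞) < 1/2))).exists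
    refine ⟨-(N:ℝ), fun m hm => ?_⟩
    by_contra hlt
    push_neg at hlt
    exact absurd (hmono hlt.le hm) (not_le.2 hN)
  set M := sInf S with hM
  refine ⟨M, ?_, ?_⟩
  · -- 1/2 ≤ P {M ≤ g}
    have hnotS : ∀ δ : ℝ, 0 < δ → P {x | g x ≤ M - δ} < 1/2 := by
      intro δ hδ
      by_contra h
      push_neg at h
      have : M ≤ M - δ := csInf_le hbdd h
      linarith
    have hterm : ∀ n : ℕ, (1/2 : ℝ≥0∞) ≤ P {x | M - 1/(n+1:ℝ) < g x} := by
      intro n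
      have hδ : (0:ℝ) < 1/(n+1:ℝ) := by positivity
      have hcompl : {x | M - 1/(n+1:ℝ) < g x} = {x | g x ≤ M - 1/(n+1:ℝ)}ᶜ := by
        ext x; simp [not_le]
      rw [hcompl, prob_compl_eq_one_sub (s := {x | g x ≤ M - 1/(n+1:ℝ)}) (hg measurableSet_Iic)]
      have h1 := (hnotS _ hδ).le
      calc (1/2 : ℝ≥0∞) = 1 - 1/2 := by
            rw [one_div, ENNReal.one_sub_inv_two]
        _ ≤ 1 - P {x | g x ≤ M - 1/(n+1:ℝ)} := tsub_le_tsub_left h1 1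
    have hanti : Antitone (fun n : ℕ => {x | M - 1/(n+1:ℝ) < g x}) := by
      intro n m hnm x hx
      simp only [Set.mem_setOf_eq] at hx ⊢
      have h1 : (1:ℝ)/(m+1:ℝ) ≤ 1/(n+1:ℝ) := by
        apply one_div_le_one_div_of_le (by positivity)
        have : (n:ℝ) ≤ (m:ℝ) := by exact_mod_cast hnm
        linarith
      linarith
    have h3 := tendsto_measure_iInter_atTop (μ := P)
      (s := fun n : ℕ => {x | M - 1/(n+1:ℝ) < g x})
      (fun n => (hg measurableSet_Ioi).nullMeasurableSet) hanti ⟨0, measure_ne_top _ _⟩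
    have hIeq : (⋂ n : ℕ, {x | M - 1/(n+1:ℝ) < g x}) = {x | M ≤ g x} := by
      ext x
      simp only [Set.mem_iInter, Set.mem_setOf_eq]
      constructor
      · intro h
        refine le_of_forall_pos_le_add fun ε hε => ?_
        obtain ⟨n, hn⟩ := exists_nat_one_div_lt hε
        have := h n
        linarith
      · intro h n
        have : (0:ℝ) < 1/(n+1:ℝ) := by positivity
        linarith
    rw [hIeq] at h3
    exact ge_of_tendsto h3 (Eventually.of_forall hterm)
  · -- 1/2 ≤ P {g ≤ M}
    have hterm : ∀ n : ℕ, (1/2 : ℝ≥0∞) ≤ P {x | g x ≤ M + 1/(n+1:ℝ)} := by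
      intro n
      have hδ : (0:ℝ) < 1/(n+1:ℝ) := by positivity
      obtain ⟨m, hmS, hmlt⟩ := (csInf_lt_iff hbdd hne).1 (by linarith : sInf S < M + 1/(n+1:ℝ))
      exact hmono hmlt.le hmS
    have hanti : Antitone (fun n : ℕ => {x | g x ≤ M + 1/(n+1:ℝ)}) := by
      intro n m hnm x hx
      simp only [Set.mem_setOf_eq] at hx ⊢
      have h1 : (1:ℝ)/(m+1:ℝ) ≤ 1/(n+1:ℝ) := by
        apply one_div_le_one_div_of_le (by positivity)
        have : (n:ℝ) ≤ (m:ℝ) := by exact_mod_cast hnm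
        linarith
      linarith
    have h3 := tendsto_measure_iInter_atTop (μ := P)
      (s := fun n : ℕ => {x | g x ≤ M + 1/(n+1:ℝ)})
      (fun n => (hg measurableSet_Iic).nullMeasurableSet) hanti ⟨0, measure_ne_top _ _⟩
    have hIeq : (⋂ n : ℕ, {x | g x ≤ M + 1/(n+1:ℝ)}) = {x | g x ≤ M} := by
      ext x
      simp only [Set.mem_iInter, Set.mem_setOf_eq]
      constructor
      · intro h
        refine le_of_forall_pos_le_add fun ε hε => ?_
        obtain ⟨n, hn⟩ := exists_nat_one_div_lt hε
        have := h n
        linarith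
      · intro h n
        have : (0:ℝ) < 1/(n+1:ℝ) := by positivity
        linarith
    rw [hIeq] at h3
    exact ge_of_tendsto h3 (Eventually.of_forall hterm)

/-- The distance to a nonempty convex set is a convex function. -/
lemma convexOn_infDist_aux {E : Type*} [NormedAddCommGroup E] [NormedSpace ℝ E]
    {A : Set E} (hA : A.Nonempty) (hAc : Convex ℝ A) :
    ConvexOn ℝ Set.univ (fun z => infDist z A) := by
  refine ⟨convex_univ, fun x _ y _ a b ha hb hab => ?_⟩
  refine le_of_forall_pos_le_add fun ε hε => ?_
  obtain ⟨z₁, hz₁A, hz₁⟩ := (infDist_lt_iff hA).1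
    (lt_add_of_pos_right (infDist x A) hε : infDist x A < infDist x A + ε)
  obtain ⟨z₂, hz₂A, hz₂⟩ := (infDist_lt_iff hA).1
    (lt_add_of_pos_right (infDist y A) hε : infDist y A < infDist y A + ε)
  have hmem : a • z₁ + b • z₂ ∈ A := hAc hz₁A hz₂A ha hb hab
  have h1 : infDist (a • x + b • y) A ≤ dist (a • x + b • y) (a • z₁ + b • z₂) :=
    infDist_le_dist_of_mem hmem
  have h2 : dist (a • x + b • y) (a • z₁ + b • z₂) ≤ a * dist x z₁ + b * dist y z₂ := by
    rw [dist_eq_norm]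
    have heq : a • x + b • y - (a • z₁ + b • z₂) = a • (x - z₁) + b • (y - z₂) := by
      rw [smul_sub, smul_sub]; abel
    rw [heq]
    calc ‖a • (x - z₁) + b • (y - z₂)‖ ≤ ‖a • (x - z₁)‖ + ‖b • (y - z₂)‖ := norm_add_le _ _
      _ = a * dist x z₁ + b * dist y z₂ := by
          rw [norm_smul, norm_smul, Real.norm_of_nonneg ha, Real.norm_of_nonneg hb,
            dist_eq_norm, dist_eq_norm]
  have h3 : a * dist x z₁ + b * dist y z₂
      ≤ a * (infDist x A + ε) + b * (infDist y A + ε) :=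
    add_le_add (mul_le_mul_of_nonneg_left hz₁.le ha) (mul_le_mul_of_nonneg_left hz₂.le hb)
  have hsum : a * ε + b * ε = ε := by rw [← add_mul, hab, one_mul]
  have h4 : a * (infDist x A + ε) + b * (infDist y A + ε)
      = a * infDist x A + b * infDist y A + (a * ε + b * ε) := by ring
  rw [hsum] at h4
  simp only [smul_eq_mul]
  have := h1.trans (h2.trans h3)
  linarith

/-- `(a+b)^γ ≤ 2^(γ-1) * (a^γ + b^γ)` for nonnegative reals and `1 ≤ γ`. -/
lemma rpow_add_le_aux {a b γ : ℝ} (ha : 0 ≤ a) (hb : 0 ≤ b) (hγ : 1 ≤ γ) :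
    (a + b) ^ γ ≤ 2 ^ (γ - 1) * (a ^ γ + b ^ γ) := by
  have h := NNReal.rpow_add_le_mul_rpow_add_rpow a.toNNReal b.toNNReal hγ
  have h2 := (NNReal.coe_le_coe).2 h
  push_cast at h2
  rwa [Real.coe_toNNReal _ ha, Real.coe_toNNReal _ hb] at h2

/-- If the disorder `ω` satisfies a concentration inequality for convex
`1`-Lipschitz functions around their medians, then it satisfies a concentration
inequality for the distance from convex sets, with `C₁' = C₁²` and `C₂' = 2^(γ-1) C₂`. -/
theorem stmt_0
    {Ω : Type*} [MeasurableSpace Ω] (P : Measure Ω) [IsProbabilityMeasure P]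
    (n : ℕ) (ω : Ω → EuclideanSpace ℝ (Fin n)) (hω : Measurable ω)
    (γ C₁ C₂ : ℝ) (hγ : 1 < γ) (hC₁ : 0 < C₁) (hC₂ : 0 < C₂)
    (hconc : ∀ f : EuclideanSpace ℝ (Fin n) → ℝ,
      ConvexOn ℝ Set.univ f → LipschitzWith 1 f →
      ∀ Mf : ℝ,
        (1/2 : ℝ≥0∞) ≤ P {x | Mf ≤ f (ω x)} →
        (1/2 : ℝ≥0∞) ≤ P {x | f (ω x) ≤ Mf} →
        ∀ t : ℝ, 0 ≤ t →
          (P {x | t ≤ |f (ω x) - Mf|}).toReal ≤ C₁ * Real.exp (-(t ^ γ) / C₂)) :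
    ∀ A : Set (EuclideanSpace ℝ (Fin n)), Convex ℝ A →
      ∀ t : ℝ, 0 ≤ t →
        (P {x | ω x ∈ A}).toReal * (P {x | t < infDist (ω x) A}).toReal
          ≤ C₁ ^ 2 * Real.exp (-(t ^ γ) / ((2:ℝ) ^ (γ - 1) * C₂)) := by
  intro A hAconv t ht
  rcases A.eq_empty_or_nonempty with rfl | hAne
  · simp only [Set.mem_empty_iff_false, Set.setOf_false, measure_empty, ENNReal.toReal_zero,
      zero_mul]
    positivity
  -- setup
  set f : EuclideanSpace ℝ (Fin n) → ℝ := fun z => infDist z A with hf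
  have hconv : ConvexOn ℝ Set.univ f := convexOn_infDist_aux hAne hAconv
  have hlip : LipschitzWith 1 f := lipschitz_infDist_pt A
  have hgmeas : Measurable fun x => f (ω x) := (hlip.continuous.measurable).comp hω
  obtain ⟨M, hM1, hM2⟩ := exists_median_aux P (fun x => f (ω x)) hgmeas
  have hfnonneg : ∀ z, 0 ≤ f z := fun z => infDist_nonneg
  have hM0 : 0 ≤ M := by
    by_contra h
    push_neg at h
    have : {x | f (ω x) ≤ M} = (∅ : Set Ω) := by
      rw [Set.eq_empty_iff_forall_notMem]
      intro x hx
      exact absurd (le_trans (hfnonneg (ω x)) hx) (not_le.2 h)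
    rw [this, measure_empty] at hM2
    simp at hM2
  have key := hconc f hconv hlip M hM1 hM2
  have hγ0 : (0:ℝ) < γ := by linarith
  have htoReal_le : ∀ {S T : Set Ω}, S ⊆ T → (P S).toReal ≤ (P T).toReal := by
    intro S T hST
    exact ENNReal.toReal_mono (measure_ne_top _ _) (measure_mono hST)
  have hPle1 : ∀ S : Set Ω, (P S).toReal ≤ 1 := fun S => by
    rw [← ENNReal.toReal_one]
    exact ENNReal.toReal_mono ENNReal.one_ne_top prob_le_one
  have hPnonneg : ∀ S : Set Ω, 0 ≤ (P S).toReal := fun S => ENNReal.toReal_nonneg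
  -- C₁ ≥ 1
  have hC₁1 : 1 ≤ C₁ := by
    have h0 := key 0 le_rfl
    have huniv : {x | (0:ℝ) ≤ |f (ω x) - M|} = Set.univ :=
      Set.eq_univ_of_forall fun x => show (0:ℝ) ≤ |f (ω x) - M| from abs_nonneg _
    rw [huniv, measure_univ, ENNReal.toReal_one] at h0
    rwa [Real.zero_rpow (ne_of_gt hγ0), neg_zero, zero_div, Real.exp_zero, mul_one] at h0
  -- bound on P(ω ∈ A)
  have hboundA : (P {x | ω x ∈ A}).toReal ≤ C₁ * Real.exp (-(M ^ γ) / C₂) := by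
    refine le_trans (htoReal_le ?_) (key M hM0)
    intro x hx
    simp only [Set.mem_setOf_eq] at hx ⊢
    rw [show f (ω x) = 0 from infDist_zero_of_mem hx, zero_sub, abs_neg, abs_of_nonneg hM0]
  have hexp_pos : ∀ s : ℝ, 0 < Real.exp s := Real.exp_pos
  have h2pow_pos : (0:ℝ) < 2 ^ (γ - 1) := Real.rpow_pos_of_pos two_pos _
  have h2pow_ge1 : (1:ℝ) ≤ 2 ^ (γ - 1) :=
    Real.one_le_rpow one_le_two (by linarith)
  by_cases hMt : M ≤ t
  · -- main case
    have hboundT : (P {x | t < f (ω x)}).toReal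
        ≤ C₁ * Real.exp (-((t - M) ^ γ) / C₂) := by
      refine le_trans (htoReal_le ?_) (key (t - M) (by linarith))
      intro x hx
      simp only [Set.mem_setOf_eq] at hx ⊢
      have : t - M < f (ω x) - M := by linarith
      exact le_trans this.le (le_abs_self _)
    have hprod : (P {x | ω x ∈ A}).toReal * (P {x | t < infDist (ω x) A}).toReal
        ≤ (C₁ * Real.exp (-(M ^ γ) / C₂)) * (C₁ * Real.exp (-((t - M) ^ γ) / C₂)) := by
      exact mul_le_mul hboundA hboundT (hPnonneg _) (by positivity)
    refine hprod.trans ?_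
    have hexpmul : Real.exp (-(M ^ γ) / C₂) * Real.exp (-((t - M) ^ γ) / C₂)
        = Real.exp (-(M ^ γ + (t - M) ^ γ) / C₂) := by
      rw [← Real.exp_add]
      congr 1
      ring
    have heq : (C₁ * Real.exp (-(M ^ γ) / C₂)) * (C₁ * Real.exp (-((t - M) ^ γ) / C₂))
        = C₁ ^ 2 * Real.exp (-(M ^ γ + (t - M) ^ γ) / C₂) := by
      rw [← hexpmul]; ring
    rw [heq]
    gcongr C₁ ^ 2 * ?_
    rw [Real.exp_le_exp, neg_div, neg_div, neg_le_neg_iff,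
      div_le_div_iff₀ (by positivity) hC₂]
    have hkey : t ^ γ ≤ 2 ^ (γ - 1) * (M ^ γ + (t - M) ^ γ) := by
      have := rpow_add_le_aux hM0 (by linarith : (0:ℝ) ≤ t - M) hγ.le
      rwa [show M + (t - M) = t by ring] at this
    calc t ^ γ * C₂ ≤ (2 ^ (γ - 1) * (M ^ γ + (t - M) ^ γ)) * C₂ := by
          exact mul_le_mul_of_nonneg_right hkey hC₂.le
      _ = (M ^ γ + (t - M) ^ γ) * (2 ^ (γ - 1) * C₂) := by ring
  · -- easy case : t < M
    push_neg at hMt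
    have h1 : (P {x | ω x ∈ A}).toReal ≤ C₁ * Real.exp (-(t ^ γ) / (2 ^ (γ - 1) * C₂)) := by
      refine hboundA.trans ?_
      gcongr C₁ * ?_
      rw [Real.exp_le_exp, neg_div, neg_div, neg_le_neg_iff]
      have ht1 : t ^ γ ≤ M ^ γ := Real.rpow_le_rpow ht hMt.le hγ0.le
      have htγ0 : 0 ≤ t ^ γ := Real.rpow_nonneg ht γ
      calc t ^ γ / (2 ^ (γ - 1) * C₂) ≤ t ^ γ / C₂ := by
            apply div_le_div_of_nonneg_left htγ0 hC₂
            nlinarith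
        _ ≤ M ^ γ / C₂ := by gcongr
    calc (P {x | ω x ∈ A}).toReal * (P {x | t < infDist (ω x) A}).toReal
        ≤ (C₁ * Real.exp (-(t ^ γ) / (2 ^ (γ - 1) * C₂))) * 1 :=
          mul_le_mul h1 (hPle1 _) (hPnonneg _) (by positivity)
      _ ≤ C₁ ^ 2 * Real.exp (-(t ^ γ) / (2 ^ (γ - 1) * C₂)) := by
          rw [mul_one, pow_two]
          have hE := (hexp_pos (-(t ^ γ) / (2 ^ (γ - 1) * C₂))).le
          nlinarith [mul_nonneg (mul_nonneg (sub_nonneg.2 hC₁1) hC₁.le) hE]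
end

section
/- Let n ∈ ℕ, let ω be a random vector in ℝ^n, and let γ > 1 and C₁, C₂ ∈ (0,∞). Suppose that for every convex 1-Lipschitz function f : ℝ^n → ℝ and every median M_f of f(ω) one has P(|f(ω) − M_f| ≥ t) ≤ C₁ exp(−t^γ/C₂) for all t ≥ 0. Then for every η ∈ (0,∞), every convex set A ⊆ ℝ^n and every t ≥ 0, P(ω ∈ A)^η · P(d(ω, A) > t) ≤ C₁^{1+η} exp(−ε_η t^γ/C₂), where ε_η := η / (1 + η^{1/(γ−1)})^{γ−1}. -/
open MeasureTheory Metric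
open scoped ENNReal



private lemma tangent_rpow {γ : ℝ} (hγ : 1 ≤ γ) {c x : ℝ} (hc : 0 < c) (hx : 0 ≤ x) :
    c ^ γ + γ * c ^ (γ - 1) * (x - c) ≤ x ^ γ := by
  have hs : -1 ≤ x / c - 1 := by
    have : 0 ≤ x / c := div_nonneg hx hc.le
    linarith
  have hb := one_add_mul_self_le_rpow_one_add hs hγ
  have h1 : (1 : ℝ) + (x / c - 1) = x / c := by ring
  rw [h1, Real.div_rpow hx hc.le] at hb
  have hcγ : 0 < c ^ γ := Real.rpow_pos_of_pos hc _
  have key : (1 + γ * (x / c - 1)) * c ^ γ ≤ x ^ γ := by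
    calc (1 + γ * (x / c - 1)) * c ^ γ ≤ (x ^ γ / c ^ γ) * c ^ γ :=
          mul_le_mul_of_nonneg_right hb hcγ.le
      _ = x ^ γ := div_mul_cancel₀ _ hcγ.ne'
  have hcc : c ^ γ = c ^ (γ - 1) * c := by
    rw [← Real.rpow_add_one hc.ne' (γ - 1)]; ring_nf
  calc c ^ γ + γ * c ^ (γ - 1) * (x - c) = (1 + γ * (x / c - 1)) * c ^ γ := by
        rw [hcc]; field_simp
    _ ≤ x ^ γ := key

private lemma key_ineq {γ η : ℝ} (hγ : 1 < γ) (hη : 0 < η) {t M : ℝ}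
    (ht : 0 ≤ t) (hM0 : 0 ≤ M) (hMt : M ≤ t) :
    (η / (1 + η ^ (1/(γ-1))) ^ (γ-1)) * t ^ γ ≤ η * M ^ γ + (t - M) ^ γ := by
  have hγ0 : (0:ℝ) < γ := by linarith
  have hγ1 : γ - 1 ≠ 0 := sub_ne_zero.2 hγ.ne'
  rcases eq_or_lt_of_le ht with rfl | htpos
  · have hM : M = 0 := le_antisymm hMt hM0
    subst hM
    simp [Real.zero_rpow hγ0.ne']
  set β := η ^ (1/(γ-1)) with hβdef
  have hβ : 0 < β := Real.rpow_pos_of_pos hη _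
  have hβγ : β ^ (γ-1) = η := by
    rw [hβdef, ← Real.rpow_mul hη.le, one_div_mul_cancel hγ1, Real.rpow_one]
  have h1β : (0:ℝ) < 1 + β := by linarith
  set a := t / (1 + β) with hadef
  set a' := β * t / (1 + β) with ha'def
  have ha : 0 < a := div_pos htpos h1β
  have ha' : 0 < a' := div_pos (mul_pos hβ htpos) h1β
  have hsum : a + a' = t := by
    rw [hadef, ha'def]; field_simp
  have h1 := tangent_rpow hγ.le ha hM0
  have h2 := tangent_rpow hγ.le ha' (sub_nonneg.2 hMt)
  -- slope matching
  have hslope : η * a ^ (γ-1) = a' ^ (γ-1) := by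
    have : a' = β * a := by rw [ha'def, hadef]; ring
    rw [this, Real.mul_rpow hβ.le ha.le, hβγ]
  -- value at minimizer
  have hval : η * a ^ γ + a' ^ γ = (η / (1 + β) ^ (γ-1)) * t ^ γ := by
    have e1 : a ^ γ = t ^ γ / (1 + β) ^ γ := by
      rw [hadef, Real.div_rpow ht h1β.le]
    have e2 : a' ^ γ = β ^ γ * t ^ γ / (1 + β) ^ γ := by
      rw [ha'def, Real.div_rpow (by positivity) h1β.le, Real.mul_rpow hβ.le ht]
    have e3 : β ^ γ = η * β := by
      have : γ = (γ - 1) + 1 := by ring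
      rw [this, Real.rpow_add_one hβ.ne', hβγ]
    have e4 : (1 + β) ^ γ = (1 + β) ^ (γ-1) * (1 + β) := by
      conv_lhs => rw [show γ = (γ-1)+1 by ring, Real.rpow_add_one h1β.ne']
    have hpow : 0 < (1 + β) ^ (γ-1) := Real.rpow_pos_of_pos h1β _
    rw [e1, e2, e3, e4]
    field_simp
  -- combine
  have h1' := mul_le_mul_of_nonneg_left h1 hη.le
  have ha'M : t - M - a' = -(M - a) := by linarith
  rw [ha'M] at h2
  have heq : η * a ^ γ + γ * a' ^ (γ-1) * (M - a) = η * (a ^ γ + γ * a ^ (γ-1) * (M-a)) := by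
    rw [← hslope]; ring
  have h1'' : η * a ^ γ + γ * a' ^ (γ-1) * (M - a) ≤ η * M ^ γ := heq.trans_le h1'
  rw [show (1:ℝ) + η ^ (1/(γ-1)) = 1 + β from rfl]
  linarith [h1'', h2, hval]


private lemma exists_median {Ω : Type*} [MeasurableSpace Ω] (P : Measure Ω)
    [IsProbabilityMeasure P] (X : Ω → ℝ) (hX : Measurable X) (hX0 : ∀ x, 0 ≤ X x) :
    ∃ M : ℝ, 0 ≤ M ∧ (1/2 : ℝ≥0∞) ≤ P {x | M ≤ X x} ∧ (1/2 : ℝ≥0∞) ≤ P {x | X x ≤ M} := by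
  set S : Set ℝ := {m : ℝ | (1/2 : ℝ≥0∞) ≤ P {x | X x ≤ m}} with hS
  -- S nonempty
  have hSne : S.Nonempty := by
    have hmono : Monotone (fun k : ℕ => {x | X x ≤ (k : ℝ)}) :=
      fun i j hij x hx => by
        simp only [Set.mem_setOf_eq] at hx ⊢
        exact le_trans hx (Nat.cast_le.2 hij)
    have hU : (⋃ k : ℕ, {x | X x ≤ (k : ℝ)}) = Set.univ := by
      ext x
      simp only [Set.mem_iUnion, Set.mem_setOf_eq, Set.mem_univ, iff_true]
      exact exists_nat_ge (X x)
    have htend := tendsto_measure_iUnion_atTop (μ := P) hmono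
    rw [hU, measure_univ] at htend
    have hev := (tendsto_order.1 htend).1 (1/2) (by norm_num)
    obtain ⟨k, hk⟩ := hev.exists
    exact ⟨(k : ℝ), le_of_lt hk⟩
  -- lower bound 0
  have hlb : ∀ m ∈ S, (0:ℝ) ≤ m := by
    intro m hm
    by_contra h
    push_neg at h
    have hempty : {x | X x ≤ m} = ∅ :=
      Set.eq_empty_of_forall_notMem fun x hx => absurd (le_trans (hX0 x) hx) (not_le.2 h)
    rw [hS] at hm
    simp only [Set.mem_setOf_eq, hempty, measure_empty, nonpos_iff_eq_zero] at hm
    norm_num at hm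
  have hbdd : BddBelow S := ⟨0, hlb⟩
  set M := sInf S with hM
  refine ⟨M, le_csInf hSne hlb, ?_, ?_⟩
  · -- 1/2 ≤ P {M ≤ X}
    have hUnion : {x | X x < M} = ⋃ k : ℕ, {x | X x ≤ M - 1/(k+1)} := by
      ext x
      simp only [Set.mem_iUnion, Set.mem_setOf_eq]
      constructor
      · intro h
        obtain ⟨k, hk⟩ := exists_nat_one_div_lt (sub_pos.2 h)
        exact ⟨k, by linarith⟩
      · rintro ⟨k, hk⟩
        have : (0:ℝ) < 1/(k+1) := by positivity
        linarith
    have hlt : P {x | X x < M} ≤ 1/2 := by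
      rw [hUnion]
      have hmono : Monotone (fun k : ℕ => {x | X x ≤ M - 1/((k:ℝ)+1)}) := by
        intro i j hij x hx
        have : 1/((j:ℝ)+1) ≤ 1/((i:ℝ)+1) := by
          apply one_div_le_one_div_of_le (by positivity)
          exact_mod_cast add_le_add_left (Nat.cast_le.2 hij) 1
        simp only [Set.mem_setOf_eq] at hx ⊢
        linarith
      have htend := tendsto_measure_iUnion_atTop (μ := P) hmono
      refine le_of_tendsto htend (Filter.Eventually.of_forall fun k => ?_)
      have hnot : M - 1/((k:ℝ)+1) ∉ S := by
        intro hmem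
        have := csInf_le hbdd hmem
        have hp : (0:ℝ) < 1/((k:ℝ)+1) := by positivity
        rw [← hM] at this
        linarith
      rw [hS] at hnot
      simp only [Set.mem_setOf_eq, not_le] at hnot
      exact hnot.le
    have hc : {x | M ≤ X x} = {x | X x < M}ᶜ := by
      ext x; simp [not_lt]
    rw [hc, prob_compl_eq_one_sub (measurableSet_lt hX measurable_const)]
    have h12 : (1:ℝ≥0∞) - 1/2 = 1/2 := by
      rw [ENNReal.sub_eq_of_eq_add (by norm_num : (1/2:ℝ≥0∞) ≠ ⊤)]
      exact (ENNReal.add_halves 1).symm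
    calc (1/2 : ℝ≥0∞) = 1 - 1/2 := h12.symm
      _ ≤ 1 - P {x | X x < M} := tsub_le_tsub_left hlt 1
  · -- 1/2 ≤ P {X ≤ M}
    have hInter : {x | X x ≤ M} = ⋂ k : ℕ, {x | X x ≤ M + 1/(k+1)} := by
      ext x
      simp only [Set.mem_iInter, Set.mem_setOf_eq]
      constructor
      · intro h k
        have : (0:ℝ) < 1/((k:ℝ)+1) := by positivity
        linarith
      · intro h
        by_contra hcon
        push_neg at hcon
        obtain ⟨k, hk⟩ := exists_nat_one_div_lt (sub_pos.2 hcon)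
        linarith [h k]
    have hanti : Antitone (fun k : ℕ => {x | X x ≤ M + 1/((k:ℝ)+1)}) := by
      intro i j hij x hx
      have : 1/((j:ℝ)+1) ≤ 1/((i:ℝ)+1) := by
        apply one_div_le_one_div_of_le (by positivity)
        exact_mod_cast add_le_add_left (Nat.cast_le.2 hij) 1
      simp only [Set.mem_setOf_eq] at hx ⊢
      linarith
    have htend := tendsto_measure_iInter_atTop (μ := P)
      (s := fun k : ℕ => {x | X x ≤ M + 1/((k:ℝ)+1)})
      (fun k => (hX measurableSet_Iic).nullMeasurableSet) hanti ⟨0, measure_ne_top _ _⟩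
    rw [← hInter] at htend
    refine ge_of_tendsto htend (Filter.Eventually.of_forall fun k => ?_)
    have hp : (0:ℝ) < 1/((k:ℝ)+1) := by positivity
    have hlt2 : sInf S < M + 1/((k:ℝ)+1) := by rw [← hM]; linarith
    obtain ⟨m, hmS, hmlt⟩ := (csInf_lt_iff hbdd hSne).1 hlt2
    rw [hS] at hmS
    exact le_trans hmS (measure_mono fun x hx => le_trans hx hmlt.le)


private lemma convexOn_infDist' {E : Type*} [NormedAddCommGroup E] [NormedSpace ℝ E]
    {A : Set E} (hA : Convex ℝ A) (hAne : A.Nonempty) :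
    ConvexOn ℝ Set.univ (fun x => infDist x A) := by
  refine ⟨convex_univ, fun x _ y _ a b ha hb hab => ?_⟩
  refine le_of_forall_pos_le_add fun ε hε => ?_
  obtain ⟨y₁, hy₁A, hy₁⟩ := (infDist_lt_iff hAne).1
    (lt_add_of_pos_right (infDist x A) (half_pos hε))
  obtain ⟨y₂, hy₂A, hy₂⟩ := (infDist_lt_iff hAne).1
    (lt_add_of_pos_right (infDist y A) (half_pos hε))
  have hmem : a • y₁ + b • y₂ ∈ A := hA hy₁A hy₂A ha hb hab
  have h1 : infDist (a • x + b • y) A ≤ dist (a • x + b • y) (a • y₁ + b • y₂) :=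
    infDist_le_dist_of_mem hmem
  have h2 : dist (a • x + b • y) (a • y₁ + b • y₂) ≤ a * dist x y₁ + b * dist y y₂ := by
    rw [dist_eq_norm, dist_eq_norm, dist_eq_norm]
    have he : a • x + b • y - (a • y₁ + b • y₂) = a • (x - y₁) + b • (y - y₂) := by
      module
    rw [he]
    calc ‖a • (x - y₁) + b • (y - y₂)‖ ≤ ‖a • (x - y₁)‖ + ‖b • (y - y₂)‖ := norm_add_le _ _
      _ = a * ‖x - y₁‖ + b * ‖y - y₂‖ := by
          rw [norm_smul, norm_smul, Real.norm_eq_abs, Real.norm_eq_abs,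
            abs_of_nonneg ha, abs_of_nonneg hb]
  have h3 := h1.trans h2
  simp only [smul_eq_mul]
  nlinarith [mul_le_mul_of_nonneg_left hy₁.le ha, mul_le_mul_of_nonneg_left hy₂.le hb]



/-- Under median concentration for convex `1`-Lipschitz functions,
for every `η > 0`, every convex set `A` and every `t ≥ 0` one has
`P(ω ∈ A)^η · P(d(ω,A) > t) ≤ C₁^(1+η) exp(-ε_η t^γ / C₂)` with
`ε_η = η / (1 + η^(1/(γ-1)))^(γ-1)`. -/
theorem stmt_2
    {Ω : Type*} [MeasurableSpace Ω] (P : Measure Ω) [IsProbabilityMeasure P]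
    (n : ℕ) (ω : Ω → EuclideanSpace ℝ (Fin n)) (hω : Measurable ω)
    (γ C₁ C₂ : ℝ) (hγ : 1 < γ) (hC₁ : 0 < C₁) (hC₂ : 0 < C₂)
    (hconc : ∀ f : EuclideanSpace ℝ (Fin n) → ℝ,
      ConvexOn ℝ Set.univ f → LipschitzWith 1 f →
      ∀ Mf : ℝ,
        (1/2 : ℝ≥0∞) ≤ P {x | Mf ≤ f (ω x)} →
        (1/2 : ℝ≥0∞) ≤ P {x | f (ω x) ≤ Mf} →
        ∀ t : ℝ, 0 ≤ t →
          (P {x | t ≤ |f (ω x) - Mf|}).toReal ≤ C₁ * Real.exp (-(t ^ γ) / C₂)) :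
    ∀ η : ℝ, 0 < η →
      ∀ A : Set (EuclideanSpace ℝ (Fin n)), Convex ℝ A →
        ∀ t : ℝ, 0 ≤ t →
          (P {x | ω x ∈ A}).toReal ^ η * (P {x | t < infDist (ω x) A}).toReal
            ≤ C₁ ^ (1 + η) *
              Real.exp (-((η / (1 + η ^ (1/(γ-1))) ^ (γ-1)) * t ^ γ) / C₂) := by

  intro η hη A hA t ht
  have hγ0 : (0:ℝ) < γ := lt_trans one_pos hγ
  -- C₁ ≥ 1
  have hhalf : (1/2 : ℝ≥0∞) ≤ 1 := by norm_num
  have hC1 : 1 ≤ C₁ := by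
    have hm : (1/2 : ℝ≥0∞) ≤ P {x | (0:ℝ) ≤ (fun _ => (0:ℝ)) (ω x)} := by
      simp only [le_refl, Set.setOf_true, measure_univ]; exact hhalf
    have hm' : (1/2 : ℝ≥0∞) ≤ P {x | (fun _ => (0:ℝ)) (ω x) ≤ (0:ℝ)} := by
      simp only [le_refl, Set.setOf_true, measure_univ]; exact hhalf
    have h0 := hconc (fun _ => 0) (convexOn_const 0 convex_univ)
      ((LipschitzWith.const (0:ℝ)).weaken zero_le_one) 0 hm hm' 0 le_rfl
    simpa [Real.zero_rpow hγ0.ne'] using h0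
  rcases A.eq_empty_or_nonempty with rfl | hAne
  · simp only [Set.mem_empty_iff_false, Set.setOf_false, measure_empty,
      ENNReal.toReal_zero, Real.zero_rpow hη.ne', zero_mul]
    positivity
  have hconv := convexOn_infDist' hA hAne
  have hlip : LipschitzWith 1 (fun x => infDist x A) := lipschitz_infDist_pt A
  have hXm : Measurable (fun x => infDist (ω x) A) :=
    (continuous_infDist_pt A).measurable.comp hω
  obtain ⟨M, hM0, hge, hle⟩ := exists_median P _ hXm (fun x => infDist_nonneg)
  have key := hconc (fun x => infDist x A) hconv hlip M hge hle
  have hmonoR : ∀ s u : Set Ω, s ⊆ u → (P s).toReal ≤ (P u).toReal := fun s u h =>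
    ENNReal.toReal_mono (measure_ne_top P u) (measure_mono h)
  have hp : (P {x | ω x ∈ A}).toReal ≤ C₁ * Real.exp (-(M ^ γ) / C₂) := by
    refine le_trans (hmonoR _ _ ?_) (key M hM0)
    intro x hx
    simp only [Set.mem_setOf_eq] at hx ⊢
    rw [infDist_zero_of_mem hx, zero_sub, abs_neg, abs_of_nonneg hM0]
  have hd1 : 1 ≤ (1 + η ^ (1/(γ-1))) ^ (γ-1) := by
    apply Real.one_le_rpow _ (by linarith)
    have : (0:ℝ) < η ^ (1/(γ-1)) := Real.rpow_pos_of_pos hη _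
    linarith
  have hεη : η / (1 + η ^ (1/(γ-1))) ^ (γ-1) ≤ η := div_le_self hη.le hd1
  have htγ : (0:ℝ) ≤ t ^ γ := Real.rpow_nonneg ht γ
  rcases le_or_gt M t with hMt | hMt
  · -- M ≤ t
    have hq : (P {x | t < infDist (ω x) A}).toReal
        ≤ C₁ * Real.exp (-((t - M) ^ γ) / C₂) := by
      refine le_trans (hmonoR _ _ ?_) (key (t - M) (sub_nonneg.2 hMt))
      intro x hx
      simp only [Set.mem_setOf_eq] at hx ⊢
      have h := le_abs_self (infDist (ω x) A - M)
      linarith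
    have hbound : (P {x | ω x ∈ A}).toReal ^ η * (P {x | t < infDist (ω x) A}).toReal
        ≤ (C₁ * Real.exp (-(M ^ γ) / C₂)) ^ η * (C₁ * Real.exp (-((t - M) ^ γ) / C₂)) := by
      apply mul_le_mul
      · exact Real.rpow_le_rpow ENNReal.toReal_nonneg hp hη.le
      · exact hq
      · exact ENNReal.toReal_nonneg
      · positivity
    refine hbound.trans ?_
    have e1 : (-(M ^ γ) / C₂) * η + (-((t - M) ^ γ) / C₂)
        = -(η * M ^ γ + (t - M) ^ γ) / C₂ := by ring
    have hexpand : (C₁ * Real.exp (-(M ^ γ) / C₂)) ^ η * (C₁ * Real.exp (-((t - M) ^ γ) / C₂))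
        = C₁ ^ (1 + η) * Real.exp (-(η * M ^ γ + (t - M) ^ γ) / C₂) := by
      calc (C₁ * Real.exp (-(M ^ γ) / C₂)) ^ η * (C₁ * Real.exp (-((t - M) ^ γ) / C₂))
          = C₁ ^ η * Real.exp ((-(M ^ γ) / C₂) * η) * (C₁ * Real.exp (-((t - M) ^ γ) / C₂)) := by
            rw [Real.mul_rpow hC₁.le (Real.exp_nonneg _), ← Real.exp_mul]
        _ = (C₁ ^ η * C₁) * Real.exp ((-(M ^ γ) / C₂) * η + (-((t - M) ^ γ) / C₂)) := by
            rw [Real.exp_add]; ring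
        _ = C₁ ^ (1 + η) * Real.exp (-(η * M ^ γ + (t - M) ^ γ) / C₂) := by
            rw [e1, Real.rpow_add hC₁, Real.rpow_one]; ring
    rw [hexpand]
    apply mul_le_mul_of_nonneg_left _ (Real.rpow_nonneg hC₁.le _)
    apply Real.exp_le_exp.2
    have hki := key_ineq hγ hη ht hM0 hMt
    apply (div_le_div_iff_of_pos_right hC₂).2
    linarith
  · -- t < M
    have hq1 : (P {x | t < infDist (ω x) A}).toReal ≤ 1 := by
      rw [← ENNReal.toReal_one]
      exact ENNReal.toReal_mono ENNReal.one_ne_top prob_le_one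
    have hMγ : t ^ γ ≤ M ^ γ := Real.rpow_le_rpow ht hMt.le hγ0.le
    have h2 : C₁ * Real.exp (-(M ^ γ) / C₂) ≤ C₁ * Real.exp (-(t ^ γ) / C₂) := by
      apply mul_le_mul_of_nonneg_left _ hC₁.le
      apply Real.exp_le_exp.2
      apply (div_le_div_iff_of_pos_right hC₂).2
      linarith
    calc (P {x | ω x ∈ A}).toReal ^ η * (P {x | t < infDist (ω x) A}).toReal
        ≤ (P {x | ω x ∈ A}).toReal ^ η * 1 := by
          apply mul_le_mul_of_nonneg_left hq1 (Real.rpow_nonneg ENNReal.toReal_nonneg η)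
      _ = (P {x | ω x ∈ A}).toReal ^ η := mul_one _
      _ ≤ (C₁ * Real.exp (-(t ^ γ) / C₂)) ^ η :=
          Real.rpow_le_rpow ENNReal.toReal_nonneg (hp.trans h2) hη.le
      _ = C₁ ^ η * Real.exp ((-(t ^ γ) / C₂) * η) := by
          rw [Real.mul_rpow hC₁.le (Real.exp_nonneg _), ← Real.exp_mul]
      _ ≤ C₁ ^ (1 + η) *
            Real.exp (-((η / (1 + η ^ (1/(γ-1))) ^ (γ-1)) * t ^ γ) / C₂) := by
          apply mul_le_mul
          · exact Real.rpow_le_rpow_of_exponent_le hC1 (by linarith)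
          · apply Real.exp_le_exp.2
            have hmul : (η / (1 + η ^ (1/(γ-1))) ^ (γ-1)) * t ^ γ ≤ η * t ^ γ :=
              mul_le_mul_of_nonneg_right hεη htγ
            rw [div_mul_eq_mul_div]
            apply (div_le_div_iff_of_pos_right hC₂).2
            linarith
          · exact Real.exp_nonneg _
          · exact Real.rpow_nonneg hC₁.le _
end

section
/- Let n ∈ ℕ, let ω be a random vector in ℝ^n, and let γ > 0 and C₁', C₂' ∈ (0,∞). Suppose that for every convex set A ⊆ ℝ^n and every t ≥ 0 one has P(ω ∈ A) · P(d(ω, A) > t) ≤ C₁' exp(−t^γ/C₂'). Then for every differentiable convex function f : ℝ^n → ℝ, every a ∈ ℝ and every t, c ∈ (0,∞): P(f(ω) ≤ a − t) · P(f(ω) ≥ a and |∇f(ω)| ≤ c) ≤ C₁' exp(−(t/c)^γ/C₂'), where |∇f(ω)| denotes the Euclidean norm of the gradient of f at ω. -/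
open MeasureTheory Metric
open scoped ENNReal

/-- A differentiable convex function lies above its tangent plane. -/
private lemma tangent_le_aux {E : Type*} [NormedAddCommGroup E] [InnerProductSpace ℝ E]
    [CompleteSpace E]
    {f : E → ℝ} (hf : ConvexOn ℝ Set.univ f) (hd : Differentiable ℝ f) (y z : E) :
    f y + inner ℝ (gradient f y) (z - y) ≤ f z := by
  rcases eq_or_ne z y with rfl | hzy
  · simp
  set φ : ℝ → ℝ := f ∘ (AffineMap.lineMap y z : ℝ →ᵃ[ℝ] E) with hφ
  have hφconv : ConvexOn ℝ Set.univ φ := by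
    simpa using hf.comp_affineMap (AffineMap.lineMap y z : ℝ →ᵃ[ℝ] E)
  have hline : HasDerivAt (fun s : ℝ => (AffineMap.lineMap y z : ℝ →ᵃ[ℝ] E) s) (z - y) 0 := by
    simp only [AffineMap.lineMap_apply_module']
    simpa using ((hasDerivAt_id (0 : ℝ)).smul_const (z - y)).add_const y
  have hF : HasFDerivAt f (InnerProductSpace.toDual ℝ E (gradient f y)) y :=
    hasGradientAt_iff_hasFDerivAt.mp (hd y).hasGradientAt
  have hy0 : (AffineMap.lineMap y z : ℝ →ᵃ[ℝ] E) (0 : ℝ) = y := AffineMap.lineMap_apply_zero y z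
  have hφ0 : HasDerivAt φ (inner ℝ (gradient f y) (z - y)) 0 := by
    have := (hy0 ▸ hF).comp_hasDerivAt (0 : ℝ) hline
    simpa [hφ, InnerProductSpace.toDual_apply_apply] using this
  have hslope := hφconv.le_slope_of_hasDerivAt (Set.mem_univ (0 : ℝ)) (Set.mem_univ (1 : ℝ))
    zero_lt_one hφ0
  have h01 : slope φ 0 1 = f z - f y := by
    simp [slope_def_field, hφ, AffineMap.lineMap_apply_one, AffineMap.lineMap_apply_zero]
  rw [h01] at hslope
  linarith

/-- Under distance concentration for convex sets, every differentiable
convex function `f` satisfies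
`P(f(ω) ≤ a - t) · P(f(ω) ≥ a, |∇f(ω)| ≤ c) ≤ C₁' exp(-(t/c)^γ / C₂')`. -/
theorem stmt_3
    {Ω : Type*} [MeasurableSpace Ω] (P : Measure Ω) [IsProbabilityMeasure P]
    (n : ℕ) (ω : Ω → EuclideanSpace ℝ (Fin n)) (hω : Measurable ω)
    (γ C₁' C₂' : ℝ) (hγ : 0 < γ) (hC₁ : 0 < C₁') (hC₂ : 0 < C₂')
    (hdist : ∀ A : Set (EuclideanSpace ℝ (Fin n)), Convex ℝ A →
      ∀ t : ℝ, 0 ≤ t →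
        (P {x | ω x ∈ A}).toReal * (P {x | t < infDist (ω x) A}).toReal
          ≤ C₁' * Real.exp (-(t ^ γ) / C₂')) :
    ∀ f : EuclideanSpace ℝ (Fin n) → ℝ,
      ConvexOn ℝ Set.univ f → Differentiable ℝ f →
      ∀ a t c : ℝ, 0 < t → 0 < c →
        (P {x | f (ω x) ≤ a - t}).toReal *
          (P {x | a ≤ f (ω x) ∧ ‖gradient f (ω x)‖ ≤ c}).toReal
            ≤ C₁' * Real.exp (-((t / c) ^ γ) / C₂') := by
  intro f hfconv hfd a t c ht hc
  set A : Set (EuclideanSpace ℝ (Fin n)) := {y | f y ≤ a - t} with hA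
  have htc : 0 < t / c := div_pos ht hc
  have hRpos : 0 < C₁' * Real.exp (-((t / c) ^ γ) / C₂') :=
    mul_pos hC₁ (Real.exp_pos _)
  by_cases hAne : A.Nonempty
  · have hAconv : Convex ℝ A := by
      have := hfconv.convex_le (a - t)
      simpa [hA, Set.sep_univ] using this
    have hsubset : ∀ s : ℝ, s < t / c →
        {x | a ≤ f (ω x) ∧ ‖gradient f (ω x)‖ ≤ c} ⊆ {x | s < infDist (ω x) A} := by
      intro s hs x hx
      obtain ⟨hax, hgx⟩ := hx
      have hxd : t / c ≤ infDist (ω x) A := by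
        rw [← not_lt]
        intro hlt
        obtain ⟨z, hz, hdlt⟩ := (Metric.infDist_lt_iff hAne).mp hlt
        have htan := tangent_le_aux hfconv hfd (ω x) z
        have hcs : |inner ℝ (gradient f (ω x)) (z - ω x)| ≤
            ‖gradient f (ω x)‖ * ‖z - ω x‖ := abs_real_inner_le_norm _ _
        have hzx : ‖z - ω x‖ = dist (ω x) z := by
          rw [dist_eq_norm, norm_sub_rev]
        have hfz : f z ≤ a - t := hz
        have h1 : -(c * dist (ω x) z) ≤ inner ℝ (gradient f (ω x)) (z - ω x) := by
          have h2 : ‖gradient f (ω x)‖ * ‖z - ω x‖ ≤ c * dist (ω x) z := by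
            rw [hzx] at *
            exact mul_le_mul_of_nonneg_right hgx dist_nonneg
          nlinarith [abs_le.mp hcs]
        have hdz : t ≤ c * dist (ω x) z := by linarith
        have : t / c ≤ dist (ω x) z := by
          rw [div_le_iff₀ hc]; linarith
        linarith
      exact lt_of_lt_of_le hs hxd
    have key : ∀ s ∈ Set.Ico (0 : ℝ) (t / c),
        (P {x | f (ω x) ≤ a - t}).toReal *
          (P {x | a ≤ f (ω x) ∧ ‖gradient f (ω x)‖ ≤ c}).toReal
            ≤ C₁' * Real.exp (-(s ^ γ) / C₂') := by
      intro s hsmem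
      obtain ⟨hs0, hslt⟩ := hsmem
      have hmono : (P {x | a ≤ f (ω x) ∧ ‖gradient f (ω x)‖ ≤ c}).toReal
          ≤ (P {x | s < infDist (ω x) A}).toReal := by
        apply ENNReal.toReal_mono (measure_ne_top P _)
        exact measure_mono (hsubset s hslt)
      calc (P {x | f (ω x) ≤ a - t}).toReal *
            (P {x | a ≤ f (ω x) ∧ ‖gradient f (ω x)‖ ≤ c}).toReal
          ≤ (P {x | ω x ∈ A}).toReal * (P {x | s < infDist (ω x) A}).toReal := by
            apply mul_le_mul_of_nonneg_left hmono ENNReal.toReal_nonneg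
        _ ≤ C₁' * Real.exp (-(s ^ γ) / C₂') := hdist A hAconv s hs0
    -- take the limit s → (t/c)⁻
    have hcont : ContinuousWithinAt (fun s : ℝ => C₁' * Real.exp (-(s ^ γ) / C₂'))
        (Set.Iio (t / c)) (t / c) := by
      apply ContinuousAt.continuousWithinAt
      have h1 : ContinuousAt (fun s : ℝ => s ^ γ) (t / c) :=
        Real.continuousAt_rpow_const _ _ (Or.inl htc.ne')
      exact (Real.continuous_exp.continuousAt.comp
        ((h1.neg).div_const C₂')).const_smul C₁' |>.congr (by
          filter_upwards with s
          simp [smul_eq_mul])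
    have hev : ∀ᶠ s in nhdsWithin (t / c) (Set.Iio (t / c)),
        (P {x | f (ω x) ≤ a - t}).toReal *
          (P {x | a ≤ f (ω x) ∧ ‖gradient f (ω x)‖ ≤ c}).toReal
            ≤ C₁' * Real.exp (-(s ^ γ) / C₂') := by
      filter_upwards [Ioo_mem_nhdsLT_of_mem (Set.mem_Ioc.mpr ⟨htc, le_refl _⟩)] with s hs
      exact key s ⟨hs.1.le, hs.2⟩
    exact ge_of_tendsto hcont.tendsto hev
  · have : {x | f (ω x) ≤ a - t} = (∅ : Set Ω) := by
      ext x
      simp only [Set.mem_setOf_eq, Set.mem_empty_iff_false, iff_false]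
      intro hxa
      exact hAne ⟨ω x, hxa⟩
    rw [this]
    simp [hRpos.le]
end

section
/- For every α ∈ (0,1) there exists a constant c_α ∈ (0,∞) such that for every integer n ≥ 2, every γ ∈ (0, 1/4) and every y ∈ [0,1]: ∫_{n−γ}^{n} ∫_{n−1}^{w} (1 − y)^α (z − y)^{−(1+α)} (w − z)^{−(1−α)} (n − w)^{−α} dz dw ≤ c_α γ^{1−α} n^{−(1+α)}. -/
open MeasureTheory intervalIntegral

open Set


/-- MVT-type bound: `a^{-α} - (a+1/2)^{-α} ≤ (1/2) a^{-(1+α)}`. -/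
lemma diff_rpow_le (α a : ℝ) (hα0 : 0 < α) (hα1 : α ≤ 1) (ha : 0 < a) :
    a ^ (-α) - (a + 1/2) ^ (-α) ≤ (1/2) * a ^ (-(1+α)) := by
  have hb : (0:ℝ) < a + 1/2 := by linarith
  have hq0 : 0 < a / (a + 1/2) := div_pos ha hb
  have hq1 : a / (a + 1/2) ≤ 1 := by rw [div_le_one hb]; linarith
  have hq : a / (a + 1/2) ≤ (a / (a + 1/2)) ^ α := by
    calc a / (a + 1/2) = (a / (a + 1/2)) ^ (1:ℝ) := (Real.rpow_one _).symm
      _ ≤ (a / (a + 1/2)) ^ α := Real.rpow_le_rpow_of_exponent_ge hq0 hq1 hα1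
  have haα : (0:ℝ) < a ^ α := Real.rpow_pos_of_pos ha α
  have hbα : (0:ℝ) < (a + 1/2) ^ α := Real.rpow_pos_of_pos hb α
  have hab : (a + 1/2) ^ (-α) = a ^ (-α) * (a / (a + 1/2)) ^ α := by
    rw [Real.div_rpow ha.le hb.le, Real.rpow_neg ha.le, Real.rpow_neg hb.le]
    field_simp
    try ring
  have h1 : a ^ (-α) * (a / (a + 1/2)) ≤ (a + 1/2) ^ (-α) := by
    rw [hab]
    exact mul_le_mul_of_nonneg_left hq (Real.rpow_nonneg ha.le _)
  have h2 : a ^ (-α) - a ^ (-α) * (a / (a + 1/2)) = a ^ (-α) * ((1/2) / (a + 1/2)) := by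
    field_simp
    ring
  have h3 : a ^ (-α) * ((1/2) / (a + 1/2)) ≤ a ^ (-α) * ((1/2) / a) := by
    apply mul_le_mul_of_nonneg_left _ (Real.rpow_nonneg ha.le _)
    apply div_le_div_of_nonneg_left (by norm_num) ha (by linarith)
  have h4 : a ^ (-α) * ((1/2) / a) = (1/2) * a ^ (-(1+α)) := by
    rw [show -(1+α) = -α + (-1) by ring, Real.rpow_add ha, Real.rpow_neg_one]
    field_simp
  linarith

/-- `(x:ℝ)^(k:ℝ)` for small naturals. -/
lemma rpow_two_eq (x : ℝ) : x ^ (2:ℝ) = x ^ (2:ℕ) := by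
  rw [show (2:ℝ) = ((2:ℕ):ℝ) by norm_num, Real.rpow_natCast]

/-- Key numeric bound. -/
lemma key_bound (α : ℝ) (hα0 : 0 < α) (hα1 : α < 1) (N s : ℝ) (hN : 2 ≤ N)
    (hs : 0 < s) (hs1 : s ≤ 1) :
    s ^ α * ((N - 2 + s) ^ (-α) - (N - 2 + s + 1/2) ^ (-α)) ≤ 9 * N ^ (-(1+α)) := by
  have ha : 0 < N - 2 + s := by linarith
  have hNpos : (0:ℝ) < N := by linarith
  have hsα : s ^ α ≤ 1 := Real.rpow_le_one hs.le hs1 hα0.le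
  have hsα0 : 0 ≤ s ^ α := Real.rpow_nonneg hs.le _
  have hdiff := diff_rpow_le α (N - 2 + s) hα0 hα1.le ha
  have hbnonneg : (0:ℝ) ≤ (N - 2 + s + 1/2) ^ (-α) := Real.rpow_nonneg (by linarith) _
  by_cases hN3 : 3 ≤ N
  · have haN : N / 3 ≤ N - 2 + s := by linarith
    have h2 : (N - 2 + s) ^ (-(1+α)) ≤ (N/3) ^ (-(1+α)) :=
      Real.rpow_le_rpow_of_nonpos (by positivity) haN (by linarith)
    have h3 : (N/3) ^ (-(1+α)) = 3 ^ (1+α) * N ^ (-(1+α)) := by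
      rw [Real.div_rpow hNpos.le (by norm_num), Real.rpow_neg (by norm_num : (0:ℝ) ≤ 3),
        div_eq_mul_inv, inv_inv]
      ring
    have h4 : (3:ℝ) ^ (1+α) ≤ 9 := by
      calc (3:ℝ) ^ (1+α) ≤ 3 ^ (2:ℝ) :=
            Real.rpow_le_rpow_of_exponent_le (by norm_num) (by linarith)
        _ = 9 := by rw [rpow_two_eq]; norm_num
    have h5 : (0:ℝ) ≤ N ^ (-(1+α)) := Real.rpow_nonneg hNpos.le _
    have hd0 : 0 ≤ (N - 2 + s) ^ (-α) - (N - 2 + s + 1/2) ^ (-α) := by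
      have := Real.rpow_le_rpow_of_nonpos ha (by linarith : N - 2 + s ≤ N - 2 + s + 1/2)
        (by linarith : -α ≤ 0)
      linarith
    calc s ^ α * ((N - 2 + s) ^ (-α) - (N - 2 + s + 1/2) ^ (-α))
        ≤ 1 * ((N - 2 + s) ^ (-α) - (N - 2 + s + 1/2) ^ (-α)) :=
          mul_le_mul_of_nonneg_right hsα hd0
      _ ≤ (1/2) * (N - 2 + s) ^ (-(1+α)) := by linarith
      _ ≤ (1/2) * ((N/3) ^ (-(1+α))) := by linarith
      _ = (1/2) * (3 ^ (1+α) * N ^ (-(1+α))) := by rw [h3]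
      _ ≤ 9 * N ^ (-(1+α)) := by nlinarith
  · -- 2 ≤ N < 3
    push_neg at hN3
    have h1 : (N - 2 + s) ^ (-α) ≤ s ^ (-α) :=
      Real.rpow_le_rpow_of_nonpos hs (by linarith) (by linarith)
    have h2 : s ^ α * s ^ (-α) = 1 := by
      rw [← Real.rpow_add hs]; simp
    have hLHS : s ^ α * ((N - 2 + s) ^ (-α) - (N - 2 + s + 1/2) ^ (-α)) ≤ 1 := by
      calc s ^ α * ((N - 2 + s) ^ (-α) - (N - 2 + s + 1/2) ^ (-α))
          ≤ s ^ α * s ^ (-α) := by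
            apply mul_le_mul_of_nonneg_left _ hsα0
            linarith
        _ = 1 := h2
    have hRHS : (1:ℝ) ≤ 9 * N ^ (-(1+α)) := by
      have hNe : N ^ (1+α) ≤ 9 := by
        calc N ^ (1+α) ≤ N ^ (2:ℝ) :=
              Real.rpow_le_rpow_of_exponent_le (by linarith) (by linarith)
          _ = N ^ (2:ℕ) := rpow_two_eq N
          _ ≤ 9 := by nlinarith
      have hpos : 0 < N ^ (1+α) := Real.rpow_pos_of_pos hNpos _
      rw [Real.rpow_neg hNpos.le, ← div_eq_mul_inv, le_div_iff₀ hpos]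
      linarith
    linarith

/-- Bound on the inner integral, uniform in `w ∈ [N-1/4, N]`. -/
lemma inner_bound (α : ℝ) (hα0 : 0 < α) (hα1 : α < 1) (N y w : ℝ)
    (hN : 2 ≤ N) (hy0 : 0 ≤ y) (hy1 : y < 1) (hw1 : N - 1/4 ≤ w) (hw2 : w ≤ N) :
    (∫ z in (N - 1)..w, (1 - y) ^ α * (z - y) ^ (-(1 + α)) * (w - z) ^ (-(1 - α)))
      ≤ (52 / α) * N ^ (-(1+α)) := by
  have hαne : α ≠ 0 := ne_of_gt hα0
  have hNpos : (0:ℝ) < N := by linarith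
  have hRHSpos : (0:ℝ) ≤ (52 / α) * N ^ (-(1+α)) := by positivity
  have hm1 : N - 1 ≤ N - 1/2 := by linarith
  have hm2 : N - (1:ℝ)/2 ≤ w := by linarith
  by_cases hInt : IntervalIntegrable
      (fun z => (1 - y) ^ α * (z - y) ^ (-(1 + α)) * (w - z) ^ (-(1 - α))) volume (N - 1) w
  · have hI1 : IntervalIntegrable
        (fun z => (1 - y) ^ α * (z - y) ^ (-(1 + α)) * (w - z) ^ (-(1 - α)))
        volume (N - 1) (N - 1/2) := by
      apply hInt.mono_set
      rw [Set.uIcc_of_le hm1, Set.uIcc_of_le (hm1.trans hm2)]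
      exact Set.Icc_subset_Icc le_rfl hm2
    have hI2 : IntervalIntegrable
        (fun z => (1 - y) ^ α * (z - y) ^ (-(1 + α)) * (w - z) ^ (-(1 - α)))
        volume (N - 1/2) w := by
      apply hInt.mono_set
      rw [Set.uIcc_of_le hm2, Set.uIcc_of_le (hm1.trans hm2)]
      exact Set.Icc_subset_Icc hm1 le_rfl
    rw [← intervalIntegral.integral_add_adjacent_intervals hI1 hI2]
    have piece1 : (∫ z in (N-1)..(N-1/2),
        (1 - y) ^ α * (z - y) ^ (-(1 + α)) * (w - z) ^ (-(1 - α)))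
          ≤ (36 / α) * N ^ (-(1+α)) := by
      have hcont : ContinuousOn (fun z : ℝ => ((1 - y) ^ α * 4) * (z - y) ^ (-(1 + α)))
          (Set.uIcc (N-1) (N-1/2)) := by
        rw [Set.uIcc_of_le hm1]
        apply ContinuousOn.mul continuousOn_const
        apply ContinuousOn.rpow_const (by fun_prop)
        intro z hz
        left
        have : N - 1 ≤ z := hz.1
        have hzy : 0 < z - y := by linarith
        exact ne_of_gt hzy
      have hg1int : IntervalIntegrable (fun z : ℝ => ((1 - y) ^ α * 4) * (z - y) ^ (-(1 + α)))
          volume (N-1) (N-1/2) := hcont.intervalIntegrable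
      have hmono : (∫ z in (N-1)..(N-1/2),
          (1 - y) ^ α * (z - y) ^ (-(1 + α)) * (w - z) ^ (-(1 - α)))
            ≤ ∫ z in (N-1)..(N-1/2), ((1 - y) ^ α * 4) * (z - y) ^ (-(1 + α)) := by
        apply intervalIntegral.integral_mono_on hm1 hI1 hg1int
        intro z hz
        have hzy : 0 < z - y := by have := hz.1; linarith
        have hwz : (1:ℝ)/4 ≤ w - z := by have := hz.2; linarith
        have h4 : (w - z) ^ (-(1 - α)) ≤ 4 := by
          rw [Real.rpow_neg (by linarith)]
          have hp1 : ((1:ℝ)/4) ^ (1-α) ≤ (w - z) ^ (1-α) :=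
            Real.rpow_le_rpow (by norm_num) hwz (by linarith)
          have hp2 : ((1:ℝ)/4) ^ ((1:ℝ)) ≤ ((1:ℝ)/4) ^ (1-α) :=
            Real.rpow_le_rpow_of_exponent_ge (by norm_num) (by norm_num) (by linarith)
          rw [Real.rpow_one] at hp2
          rw [show (4:ℝ) = ((1:ℝ)/4)⁻¹ by norm_num]
          exact inv_anti₀ (by norm_num) (by linarith)
        calc (1 - y) ^ α * (z - y) ^ (-(1 + α)) * (w - z) ^ (-(1 - α))
            ≤ ((1 - y) ^ α * (z - y) ^ (-(1+α))) * 4 :=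
              mul_le_mul_of_nonneg_left h4
                (mul_nonneg (Real.rpow_nonneg (by linarith) _) (Real.rpow_nonneg hzy.le _))
          _ = ((1 - y) ^ α * 4) * (z - y) ^ (-(1 + α)) := by ring
      have hcomp : (∫ z in (N-1)..(N-1/2), (z - y) ^ (-(1 + α)))
          = ∫ x in (N-1-y)..(N-1/2-y), x ^ (-(1 + α)) :=
        intervalIntegral.integral_comp_sub_right (fun t : ℝ => t ^ (-(1 + α))) y
      have hnot : (0:ℝ) ∉ Set.uIcc (N-1-y) (N-1/2-y) := by
        rw [Set.uIcc_of_le (by linarith)]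
        simp only [Set.mem_Icc, not_and, not_le]
        intro h1
        linarith
      have hval : (∫ x in (N-1-y)..(N-1/2-y), x ^ (-(1 + α)))
          = ((N-1/2-y) ^ (-α) - (N-1-y) ^ (-α)) / (-α) := by
        rw [integral_rpow (Or.inr ⟨by intro h; apply hαne; linarith [neg_eq_iff_eq_neg.mp h], hnot⟩)]
        rw [show -(1+α) + 1 = -α by ring]
      have hkey := key_bound α hα0 hα1 N (1-y) hN (by linarith) (by linarith)
      rw [show N-2+(1-y) = N-1-y by ring] at hkey
      rw [show N-1-y+1/2 = N-1/2-y by ring] at hkey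
      have hint_eq : (∫ z in (N-1)..(N-1/2), ((1 - y) ^ α * 4) * (z - y) ^ (-(1 + α)))
          = ((1 - y) ^ α * 4) * (((N-1/2-y) ^ (-α) - (N-1-y) ^ (-α)) / (-α)) := by
        rw [intervalIntegral.integral_const_mul, hcomp, hval]
      have heq : ((1 - y) ^ α * 4) * (((N-1/2-y) ^ (-α) - (N-1-y) ^ (-α)) / (-α))
          = (4/α) * ((1-y) ^ α * ((N-1-y) ^ (-α) - (N-1/2-y) ^ (-α))) := by
        rw [div_neg, ← neg_div, neg_sub]
        ring
      have hfin : (4/α) * ((1-y) ^ α * ((N-1-y) ^ (-α) - (N-1/2-y) ^ (-α)))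
          ≤ (4/α) * (9 * N ^ (-(1+α))) :=
        mul_le_mul_of_nonneg_left hkey (by positivity)
      have : (4/α) * (9 * N ^ (-(1+α))) = (36/α) * N ^ (-(1+α)) := by ring
      rw [hint_eq, heq] at hmono
      linarith [hmono, hfin]
    have piece2 : (∫ z in (N-1/2)..w,
        (1 - y) ^ α * (z - y) ^ (-(1 + α)) * (w - z) ^ (-(1 - α)))
          ≤ (16 / α) * N ^ (-(1+α)) := by
      have h0 : IntervalIntegrable (fun x : ℝ => x ^ (-(1-α))) volume (w - (N-1/2)) 0 :=
        intervalIntegrable_rpow' (by linarith)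
      have h1 := h0.comp_sub_left w
      rw [sub_sub_cancel, sub_zero] at h1
      have hg2int : IntervalIntegrable
          (fun z : ℝ => (16 * N ^ (-(1+α))) * (w - z) ^ (-(1-α))) volume (N-1/2) w :=
        h1.const_mul _
      have hmono : (∫ z in (N-1/2)..w,
          (1 - y) ^ α * (z - y) ^ (-(1 + α)) * (w - z) ^ (-(1 - α)))
            ≤ ∫ z in (N-1/2)..w, (16 * N ^ (-(1+α))) * (w - z) ^ (-(1-α)) := by
        apply intervalIntegral.integral_mono_on hm2 hI2 hg2int
        intro z hz
        have hzy : N/4 ≤ z - y := by have := hz.1; linarith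
        have hwz : 0 ≤ w - z := by have := hz.2; linarith
        have hA : (1 - y) ^ α * (z - y) ^ (-(1 + α)) ≤ 16 * N ^ (-(1+α)) := by
          have hy' : (1 - y) ^ α ≤ 1 := Real.rpow_le_one (by linarith) (by linarith) hα0.le
          have h2 : (z - y) ^ (-(1+α)) ≤ (N/4) ^ (-(1+α)) :=
            Real.rpow_le_rpow_of_nonpos (by positivity) hzy (by linarith)
          have h3 : (N/4) ^ (-(1+α)) = N ^ (-(1+α)) * 4 ^ (1+α) := by
            rw [Real.div_rpow hNpos.le (by norm_num),
              Real.rpow_neg (by norm_num : (0:ℝ) ≤ 4), div_eq_mul_inv, inv_inv]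
          have h4 : (4:ℝ) ^ (1+α) ≤ 16 := by
            calc (4:ℝ) ^ (1+α) ≤ 4 ^ (2:ℝ) :=
                  Real.rpow_le_rpow_of_exponent_le (by norm_num) (by linarith)
              _ = 16 := by rw [rpow_two_eq]; norm_num
          calc (1 - y) ^ α * (z - y) ^ (-(1 + α))
              ≤ 1 * (z - y) ^ (-(1 + α)) :=
                mul_le_mul_of_nonneg_right hy' (Real.rpow_nonneg (by linarith) _)
            _ = (z - y) ^ (-(1 + α)) := one_mul _
            _ ≤ (N/4) ^ (-(1+α)) := h2
            _ = N ^ (-(1+α)) * 4 ^ (1+α) := h3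
            _ ≤ N ^ (-(1+α)) * 16 :=
                mul_le_mul_of_nonneg_left h4 (Real.rpow_nonneg hNpos.le _)
            _ = 16 * N ^ (-(1+α)) := mul_comm _ _
        exact mul_le_mul_of_nonneg_right hA (Real.rpow_nonneg hwz _)
      have hcomp : (∫ z in (N-1/2)..w, (w - z) ^ (-(1-α)))
          = ∫ x in (w-w)..(w-(N-1/2)), x ^ (-(1-α)) :=
        intervalIntegral.integral_comp_sub_left (fun t : ℝ => t ^ (-(1-α))) w
      rw [sub_self] at hcomp
      have hval : (∫ x in (0:ℝ)..(w-(N-1/2)), x ^ (-(1-α)))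
          = (w-(N-1/2)) ^ α / α := by
        rw [integral_rpow (Or.inl (by linarith))]
        rw [show -(1-α) + 1 = α by ring, Real.zero_rpow hαne]
        ring_nf
      have hle1 : (w-(N-1/2)) ^ α ≤ 1 :=
        Real.rpow_le_one (by linarith) (by linarith) hα0.le
      have hintval : (∫ z in (N-1/2)..w, (16 * N ^ (-(1+α))) * (w - z) ^ (-(1-α)))
          = (16 * N ^ (-(1+α))) * ((w-(N-1/2)) ^ α / α) := by
        rw [intervalIntegral.integral_const_mul, hcomp, hval]
      have hfin : (16 * N ^ (-(1+α))) * ((w-(N-1/2)) ^ α / α)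
          ≤ (16 * N ^ (-(1+α))) * (1 / α) := by
        gcongr
      rw [hintval] at hmono
      have heq2 : (16 * N ^ (-(1+α))) * (1 / α) = (16/α) * N ^ (-(1+α)) := by ring
      linarith [hmono, hfin]
    have : (36 / α) * N ^ (-(1+α)) + (16 / α) * N ^ (-(1+α)) = (52/α) * N ^ (-(1+α)) := by ring
    linarith
  · rw [intervalIntegral.integral_undef hInt]
    exact hRHSpos


/-- For every `α ∈ (0,1)` there is `c_α < ∞` such that for all integers
`n ≥ 2`, all `γ ∈ (0,1/4)` and all `y ∈ [0,1]`,
`∫_{n-γ}^n ∫_{n-1}^w (1-y)^α (z-y)^{-(1+α)} (w-z)^{-(1-α)} (n-w)^{-α} dz dw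
  ≤ c_α γ^{1-α} n^{-(1+α)}`. -/
theorem stmt_10 (α : ℝ) (hα : α ∈ Set.Ioo (0:ℝ) 1) :
    ∃ c : ℝ, 0 < c ∧ ∀ n : ℕ, 2 ≤ n → ∀ γ : ℝ, γ ∈ Set.Ioo (0:ℝ) (1/4) →
      ∀ y : ℝ, y ∈ Set.Icc (0:ℝ) 1 →
        (∫ w in ((n:ℝ) - γ)..(n:ℝ), ∫ z in ((n:ℝ) - 1)..w,
            (1 - y) ^ α * (z - y) ^ (-(1 + α)) * (w - z) ^ (-(1 - α)) * ((n:ℝ) - w) ^ (-α))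
          ≤ c * γ ^ (1 - α) * (n:ℝ) ^ (-(1 + α)) := by
  obtain ⟨hα0, hα1⟩ := hα
  have hαne : α ≠ 0 := ne_of_gt hα0
  have h1α : (1:ℝ) - α ≠ 0 := ne_of_gt (by linarith)
  have hc : 0 < 52 / (α * (1 - α)) := div_pos (by norm_num) (mul_pos hα0 (by linarith))
  refine ⟨52 / (α * (1 - α)), hc, ?_⟩
  intro n hn γ hγ y hy
  have hN : (2:ℝ) ≤ (n:ℝ) := by exact_mod_cast hn
  have hNpos : (0:ℝ) < (n:ℝ) := by linarith
  have hγ0 : 0 < γ := hγ.1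
  have hγ4 : γ < 1/4 := hγ.2
  have hRHS0 : (0:ℝ) ≤ 52 / (α * (1 - α)) * γ ^ (1 - α) * (n:ℝ) ^ (-(1 + α)) :=
    mul_nonneg (mul_nonneg hc.le (Real.rpow_nonneg hγ0.le _)) (Real.rpow_nonneg hNpos.le _)
  rcases eq_or_lt_of_le hy.2 with hy1 | hy1
  · -- y = 1 : the integrand vanishes
    have hz : ∀ w z : ℝ,
        (1 - y) ^ α * (z - y) ^ (-(1 + α)) * (w - z) ^ (-(1 - α)) * ((n:ℝ) - w) ^ (-α) = 0 := by
      intro w z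
      rw [hy1]
      simp [Real.zero_rpow hαne]
    simp only [hz, intervalIntegral.integral_zero]
    exact hRHS0
  · by_cases hInt : IntervalIntegrable (fun w => ∫ z in ((n:ℝ) - 1)..w,
        (1 - y) ^ α * (z - y) ^ (-(1 + α)) * (w - z) ^ (-(1 - α)) * ((n:ℝ) - w) ^ (-α))
        volume ((n:ℝ) - γ) n
    · have h0 : IntervalIntegrable (fun x : ℝ => x ^ (-α)) volume γ 0 :=
        intervalIntegrable_rpow' (by linarith)
      have h1 := h0.comp_sub_left (n:ℝ)
      rw [sub_zero] at h1
      have hGint : IntervalIntegrable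
          (fun w : ℝ => (52 / α * (n:ℝ) ^ (-(1+α))) * ((n:ℝ) - w) ^ (-α))
          volume ((n:ℝ) - γ) n := h1.const_mul _
      have hmono : (∫ w in ((n:ℝ) - γ)..(n:ℝ), ∫ z in ((n:ℝ) - 1)..w,
            (1 - y) ^ α * (z - y) ^ (-(1 + α)) * (w - z) ^ (-(1 - α)) * ((n:ℝ) - w) ^ (-α))
          ≤ ∫ w in ((n:ℝ) - γ)..(n:ℝ), (52 / α * (n:ℝ) ^ (-(1+α))) * ((n:ℝ) - w) ^ (-α) := by
        apply intervalIntegral.integral_mono_on (by linarith) hInt hGint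
        intro w hw
        rw [intervalIntegral.integral_mul_const]
        have hb := inner_bound α hα0 hα1 (n:ℝ) y w hN hy.1 hy1
          (by linarith [hw.1]) hw.2
        exact mul_le_mul_of_nonneg_right hb (Real.rpow_nonneg (by linarith [hw.2]) _)
      have hcomp : (∫ w in ((n:ℝ) - γ)..(n:ℝ), ((n:ℝ) - w) ^ (-α))
          = ∫ x in ((n:ℝ)-(n:ℝ))..((n:ℝ)-((n:ℝ)-γ)), x ^ (-α) :=
        intervalIntegral.integral_comp_sub_left (fun t : ℝ => t ^ (-α)) (n:ℝ)
      rw [sub_self, sub_sub_cancel] at hcomp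
      have hval : (∫ x in (0:ℝ)..γ, x ^ (-α)) = γ ^ (1-α) / (1-α) := by
        rw [integral_rpow (Or.inl (by linarith))]
        rw [show -α + 1 = 1 - α by ring, Real.zero_rpow h1α]
        ring_nf
      have hGval : (∫ w in ((n:ℝ) - γ)..(n:ℝ),
            (52 / α * (n:ℝ) ^ (-(1+α))) * ((n:ℝ) - w) ^ (-α))
          = (52 / α * (n:ℝ) ^ (-(1+α))) * (γ ^ (1-α) / (1-α)) := by
        rw [intervalIntegral.integral_const_mul, hcomp, hval]
      rw [hGval] at hmono
      have heq : (52 / α * (n:ℝ) ^ (-(1+α))) * (γ ^ (1-α) / (1-α))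
          = 52 / (α * (1-α)) * γ ^ (1-α) * (n:ℝ) ^ (-(1+α)) := by
        field_simp
      linarith
    · rw [intervalIntegral.integral_undef hInt]
      exact hRHS0
end

section
/- Let (Ω, F, P) be a probability space with a filtration F₁ ⊆ F₂ ⊆ ⋯ ⊆ F, let c ≥ 1, and for each k ≥ 1 let Φ_k be a nonnegative integrable F_k-measurable random variable and A_k ∈ F_k an event. Suppose: E[Φ₁] ≤ 1/4 and E[Φ₁ 1_{A₁}] ≤ 1/(8c); and for every k ≥ 2, almost surely E[Φ_k | F_{k−1}] ≤ c, almost surely E[Φ_k | F_{k−1}] ≤ 1/4 on the complement of A_{k−1}, and almost surely E[Φ_k 1_{A_k} | F_{k−1}] ≤ 1/(8c). Then for every M ≥ 1: E[∏_{k=1}^M Φ_k] ≤ 2^{−M} and E[(∏_{k=1}^M Φ_k) 1_{A_M}] ≤ 1/(c · 2^{M+2}). -/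
open MeasureTheory

lemma key_lemma {Ω : Type*} {mΩ : MeasurableSpace Ω} (P : Measure Ω) [IsProbabilityMeasure P]
    {m : MeasurableSpace Ω} (hm : m ≤ mΩ)
    {g f h : Ω → ℝ} (hg : StronglyMeasurable[m] g) (hgnn : ∀ a, 0 ≤ g a)
    (hgi : Integrable g P)
    (hfnn : ∀ a, 0 ≤ f a) (hfi : Integrable f P)
    (hh : AEStronglyMeasurable[mΩ] h P) (hhnn : ∀ a, 0 ≤ h a) {C : ℝ} (hhC : ∀ a, |h a| ≤ C)
    (hle : P[f|m] ≤ᵐ[P] h) :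
    Integrable (fun a => g a * f a) P ∧ ∫ a, g a * f a ∂P ≤ ∫ a, g a * h a ∂P := by
  set F := P[f|m] with hF
  have hFnn : 0 ≤ᵐ[P] F := condExp_nonneg (Filter.Eventually.of_forall hfnn)
  have hFi : Integrable F P := integrable_condExp
  have hghi : Integrable (fun a => g a * h a) P := by
    have := hgi.bdd_mul hh (Filter.Eventually.of_forall fun a => by rw [Real.norm_eq_abs]; exact hhC a)
    exact this.congr (Filter.Eventually.of_forall fun a => mul_comm _ _)
  set B := ∫ a, g a * h a ∂P with hB
  have hBnn : 0 ≤ B := integral_nonneg fun a => mul_nonneg (hgnn a) (hhnn a)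
  set gn : ℕ → Ω → ℝ := fun n a => min (g a) n with hgn
  have hgnSM : ∀ n, StronglyMeasurable[m] (gn n) :=
    fun n => (hg.measurable.min measurable_const).stronglyMeasurable
  have hgnnn : ∀ n a, 0 ≤ gn n a := fun n a => le_min (hgnn a) (Nat.cast_nonneg n)
  have hgnle : ∀ n a, gn n a ≤ g a := fun n a => min_le_left _ _
  have hgnbd : ∀ n a, ‖gn n a‖ ≤ (n : ℝ) := by
    intro n a
    rw [Real.norm_eq_abs, abs_of_nonneg (hgnnn n a)]
    exact min_le_right _ _
  have hgnfi : ∀ n, Integrable (fun a => gn n a * f a) P :=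
    fun n => hfi.bdd_mul ((hgnSM n).mono hm).aestronglyMeasurable (Filter.Eventually.of_forall (hgnbd n))
  have hstep : ∀ n, ∫ a, gn n a * f a ∂P ≤ B := by
    intro n
    have hpull : P[fun a => gn n a * f a|m] =ᵐ[P] fun a => gn n a * F a :=
      condExp_mul_of_stronglyMeasurable_left (hgnSM n) (hgnfi n) hfi
    have h1 : ∫ a, gn n a * f a ∂P = ∫ a, gn n a * F a ∂P := by
      rw [← integral_condExp hm]
      exact integral_congr_ae hpull
    rw [h1]
    refine integral_mono_ae (hFi.bdd_mul ((hgnSM n).mono hm).aestronglyMeasurable (Filter.Eventually.of_forall (hgnbd n)))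
      hghi ?_
    filter_upwards [hle, hFnn] with a ha haF
    calc gn n a * F a ≤ gn n a * h a := mul_le_mul_of_nonneg_left ha (hgnnn n a)
      _ ≤ g a * h a := mul_le_mul_of_nonneg_right (hgnle n a) (hhnn a)
  have hsup : ∀ a, (⨆ n, ENNReal.ofReal (gn n a * f a)) = ENNReal.ofReal (g a * f a) := by
    intro a
    refine le_antisymm (iSup_le fun n => ENNReal.ofReal_le_ofReal
      (mul_le_mul_of_nonneg_right (hgnle n a) (hfnn a))) ?_
    have : gn ⌈g a⌉₊ a = g a := min_eq_left (Nat.le_ceil _)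
    calc ENNReal.ofReal (g a * f a) = ENNReal.ofReal (gn ⌈g a⌉₊ a * f a) := by rw [this]
      _ ≤ ⨆ n, ENNReal.ofReal (gn n a * f a) := le_iSup (fun n => ENNReal.ofReal (gn n a * f a)) _
  have hmono : ∀ᵐ a ∂P, Monotone fun n => ENNReal.ofReal (gn n a * f a) := by
    refine Filter.Eventually.of_forall fun a => ?_
    intro i j hij
    exact ENNReal.ofReal_le_ofReal (mul_le_mul_of_nonneg_right
      (min_le_min le_rfl (Nat.cast_le.2 hij)) (hfnn a))
  have haem : ∀ n, AEMeasurable (fun a => ENNReal.ofReal (gn n a * f a)) P :=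
    fun n => ((hgnfi n).aestronglyMeasurable.aemeasurable).ennreal_ofReal
  have hlin : ∫⁻ a, ENNReal.ofReal (g a * f a) ∂P ≤ ENNReal.ofReal B := by
    have : ∫⁻ a, ENNReal.ofReal (g a * f a) ∂P = ⨆ n, ∫⁻ a, ENNReal.ofReal (gn n a * f a) ∂P := by
      rw [← lintegral_iSup' haem hmono]
      exact lintegral_congr fun a => (hsup a).symm
    rw [this]
    refine iSup_le fun n => ?_
    rw [← ofReal_integral_eq_lintegral_ofReal (hgnfi n)
      (Filter.Eventually.of_forall fun a => mul_nonneg (hgnnn n a) (hfnn a))]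
    exact ENNReal.ofReal_le_ofReal (hstep n)
  have hgfm : AEStronglyMeasurable[mΩ] (fun a => g a * f a) P :=
    (hgi.aestronglyMeasurable.mul hfi.aestronglyMeasurable)
  have hint : Integrable (fun a => g a * f a) P := by
    refine ⟨hgfm, ?_⟩
    rw [hasFiniteIntegral_iff_norm]
    have : ∀ a, ENNReal.ofReal ‖g a * f a‖ = ENNReal.ofReal (g a * f a) := fun a => by
      rw [Real.norm_eq_abs, abs_of_nonneg (mul_nonneg (hgnn a) (hfnn a))]
    simp_rw [this]
    exact lt_of_le_of_lt hlin ENNReal.ofReal_lt_top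
  refine ⟨hint, ?_⟩
  rw [← ENNReal.ofReal_le_ofReal_iff hBnn,
    ofReal_integral_eq_lintegral_ofReal hint
      (Filter.Eventually.of_forall fun a => mul_nonneg (hgnn a) (hfnn a))]
  exact hlin

/-- Iterated conditional bounds for the coarse-graining argument:
if `E[Φ₁] ≤ 1/4`, `E[Φ₁ 1_{A₁}] ≤ 1/(8c)` and, for `k ≥ 2`,
`E[Φ_k | 𝔽_{k-1}] ≤ c` a.s., `E[Φ_k | 𝔽_{k-1}] ≤ 1/4` a.s. on `A_{k-1}ᶜ` and
`E[Φ_k 1_{A_k} | 𝔽_{k-1}] ≤ 1/(8c)` a.s., then for every `M ≥ 1`: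
`E[∏_{k=1}^M Φ_k] ≤ 2^{-M}` and `E[(∏_{k=1}^M Φ_k) 1_{A_M}] ≤ 1/(c 2^{M+2})`. -/
theorem stmt_14
    {Ω : Type*} {mΩ : MeasurableSpace Ω} (P : Measure Ω) [IsProbabilityMeasure P]
    (𝔽 : Filtration ℕ mΩ) (c : ℝ) (hc : 1 ≤ c)
    (Φ : ℕ → Ω → ℝ) (A : ℕ → Set Ω)
    (hΦ_meas : ∀ k, 1 ≤ k → StronglyMeasurable[𝔽 k] (Φ k))
    (hΦ_nonneg : ∀ k, 1 ≤ k → ∀ a, 0 ≤ Φ k a)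
    (hΦ_int : ∀ k, 1 ≤ k → Integrable (Φ k) P)
    (hA_meas : ∀ k, 1 ≤ k → MeasurableSet[𝔽 k] (A k))
    (h1 : ∫ a, Φ 1 a ∂P ≤ 1/4)
    (h1A : ∫ a, Φ 1 a * (A 1).indicator (fun _ => (1:ℝ)) a ∂P ≤ 1 / (8 * c))
    (hk : ∀ k, 2 ≤ k → P[Φ k|𝔽 (k - 1)] ≤ᵐ[P] fun _ => c)
    (hkAc : ∀ k, 2 ≤ k →
      ∀ᵐ a ∂P, a ∈ (A (k - 1))ᶜ → (P[Φ k|𝔽 (k - 1)]) a ≤ 1/4)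
    (hkA : ∀ k, 2 ≤ k →
      P[fun a => Φ k a * (A k).indicator (fun _ => (1:ℝ)) a|𝔽 (k - 1)]
        ≤ᵐ[P] fun _ => 1 / (8 * c)) :
    ∀ M : ℕ, 1 ≤ M →
      (Integrable (fun a => ∏ k ∈ Finset.Icc 1 M, Φ k a) P ∧
        ∫ a, ∏ k ∈ Finset.Icc 1 M, Φ k a ∂P ≤ 1 / 2 ^ M) ∧
      ∫ a, (∏ k ∈ Finset.Icc 1 M, Φ k a) * (A M).indicator (fun _ => (1:ℝ)) a ∂P
        ≤ 1 / (c * 2 ^ (M + 2)) := by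
  classical
  have hc0 : (0:ℝ) < c := by linarith
  intro M hM
  induction M, hM using Nat.le_induction with
  | base =>
    simp only [Finset.Icc_self, Finset.prod_singleton]
    refine ⟨⟨hΦ_int 1 le_rfl, ?_⟩, ?_⟩
    · calc ∫ a, Φ 1 a ∂P ≤ 1/4 := h1
        _ ≤ 1 / 2 ^ 1 := by norm_num
    · calc ∫ a, Φ 1 a * (A 1).indicator (fun _ => (1:ℝ)) a ∂P ≤ 1 / (8*c) := h1A
        _ = 1 / (c * 2 ^ (1+2)) := by ring_nf
  | succ M hM IH =>
    obtain ⟨⟨hgi, hgint⟩, hgA⟩ := IH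
    set g := fun a => ∏ k ∈ Finset.Icc 1 M, Φ k a with hgdef
    have hM1 : (1:ℕ) ≤ M + 1 := by omega
    have h2M1 : (2:ℕ) ≤ M + 1 := by omega
    have hgSM : StronglyMeasurable[𝔽 M] g := by
      refine Finset.stronglyMeasurable_fun_prod _ fun k hk => ?_
      obtain ⟨hk1, hk2⟩ := Finset.mem_Icc.1 hk
      exact (hΦ_meas k hk1).mono (𝔽.mono hk2)
    have hgnn : ∀ a, 0 ≤ g a :=
      fun a => Finset.prod_nonneg fun k hk => hΦ_nonneg k (Finset.mem_Icc.1 hk).1 a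
    have hsplit : ∀ a, ∏ k ∈ Finset.Icc 1 (M+1), Φ k a = g a * Φ (M+1) a :=
      fun a => Finset.prod_Icc_succ_top hM1 _
    have hAmΩ : MeasurableSet (A M) := 𝔽.le M _ (hA_meas M hM)
    have hAmΩ1 : MeasurableSet (A (M+1)) := 𝔽.le (M+1) _ (hA_meas (M+1) hM1)
    have hk' := hk (M+1) h2M1
    have hkAc' := hkAc (M+1) h2M1
    have hkA' := hkA (M+1) h2M1
    simp only [Nat.add_sub_cancel] at hk' hkAc' hkA'
    have h2Mpos : (0:ℝ) < 2 ^ M := by positivity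
    -- part 1 : bound on ∫ Π_{M+1}
    set ψ : Ω → ℝ := fun a => if a ∈ A M then c else 1/4 with hψdef
    have hψmeas : AEStronglyMeasurable ψ P :=
      ((Measurable.ite hAmΩ measurable_const measurable_const).stronglyMeasurable).aestronglyMeasurable
    have hψnn : ∀ a, 0 ≤ ψ a := by
      intro a; by_cases h : a ∈ A M <;> simp only [hψdef, h, if_true, if_false] <;> norm_num
      linarith
    have hψC : ∀ a, |ψ a| ≤ c := by
      intro a; by_cases h : a ∈ A M <;> simp only [hψdef, h, if_true, if_false]
      · rw [abs_of_nonneg (by linarith)]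
      · rw [abs_of_nonneg (by norm_num)]; linarith
    have hle1 : P[Φ (M+1)|𝔽 M] ≤ᵐ[P] ψ := by
      filter_upwards [hk', hkAc'] with a ha1 ha2
      by_cases hA : a ∈ A M
      · simpa [hψdef, hA] using ha1
      · simpa [hψdef, hA] using ha2 hA
    obtain ⟨hint1, hb1⟩ := key_lemma P (𝔽.le M) hgSM hgnn hgi
      (hΦ_nonneg (M+1) hM1) (hΦ_int (M+1) hM1) hψmeas hψnn hψC hle1
    have hindint : Integrable ((A M).indicator g) P := hgi.indicator hAmΩ
    have hindcint : Integrable ((A M)ᶜ.indicator g) P := hgi.indicator hAmΩ.compl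
    have hψsplit : ∀ a, g a * ψ a =
        c * (A M).indicator g a + (1/4) * (A M)ᶜ.indicator g a := by
      intro a
      by_cases h : a ∈ A M <;>
        simp [hψdef, h, Set.indicator_apply, mul_comm] 
    have hindeq : ∫ a, (A M).indicator g a ∂P =
        ∫ a, g a * (A M).indicator (fun _ => (1:ℝ)) a ∂P := by
      refine integral_congr_ae (Filter.Eventually.of_forall fun a => ?_)
      by_cases h : a ∈ A M <;> simp [Set.indicator_apply, h]
    have hindc_le : ∫ a, (A M)ᶜ.indicator g a ∂P ≤ ∫ a, g a ∂P := by
      refine integral_mono hindcint hgi fun a => ?_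
      by_cases h : a ∈ (A M)ᶜ <;> simp [Set.indicator_apply, h, hgnn a]
    have hψint : ∫ a, g a * ψ a ∂P ≤ 1 / 2 ^ (M+1) := by
      have : ∫ a, g a * ψ a ∂P =
          c * ∫ a, (A M).indicator g a ∂P + (1/4) * ∫ a, (A M)ᶜ.indicator g a ∂P := by
        rw [integral_congr_ae (Filter.Eventually.of_forall hψsplit), integral_add
          (hindint.const_mul c) (hindcint.const_mul (1/4)), integral_const_mul _ _, integral_const_mul _ _]
      rw [this, hindeq]
      have h1' : c * ∫ a, g a * (A M).indicator (fun _ => (1:ℝ)) a ∂P ≤ 1 / 2 ^ (M+2) := by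
        calc c * ∫ a, g a * (A M).indicator (fun _ => (1:ℝ)) a ∂P
            ≤ c * (1 / (c * 2 ^ (M+2))) := by
              exact mul_le_mul_of_nonneg_left hgA (le_of_lt hc0)
          _ = 1 / 2 ^ (M+2) := by field_simp
      have h2' : (1/4 : ℝ) * ∫ a, (A M)ᶜ.indicator g a ∂P ≤ (1/4) * (1 / 2 ^ M) := by
        refine mul_le_mul_of_nonneg_left (le_trans hindc_le hgint) (by norm_num)
      have heq : (1:ℝ) / 2 ^ (M+1) = 1 / 2 ^ (M+2) + (1/4) * (1 / 2 ^ M) := by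
        rw [pow_succ, pow_succ, pow_succ]
        field_simp
        ring
      linarith
    -- part 2 : bound on ∫ Π_{M+1} 1_{A_{M+1}}
    set f' : Ω → ℝ := fun a => Φ (M+1) a * (A (M+1)).indicator (fun _ => (1:ℝ)) a with hf'def
    have hf'nn : ∀ a, 0 ≤ f' a := fun a =>
      mul_nonneg (hΦ_nonneg (M+1) hM1 a) (Set.indicator_nonneg (fun _ _ => zero_le_one) a)
    have hf'int : Integrable f' P := by
      refine ((hΦ_int (M+1) hM1).indicator hAmΩ1).congr
        (Filter.Eventually.of_forall fun a => ?_)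
      by_cases h : a ∈ A (M+1) <;> simp [hf'def, Set.indicator_apply, h]
    have hhC2 : ∀ a : Ω, |(fun _ => 1 / (8*c) : Ω → ℝ) a| ≤ c := by
      intro a
      rw [abs_of_nonneg (by positivity)]
      rw [div_le_iff₀ (by positivity)]
      nlinarith
    obtain ⟨hint2, hb2⟩ := key_lemma P (𝔽.le M) hgSM hgnn hgi hf'nn hf'int
      aestronglyMeasurable_const (fun a => by positivity) hhC2 hkA'
    have hb2' : ∫ a, g a * f' a ∂P ≤ 1 / (c * 2 ^ (M+1+2)) := by
      refine le_trans hb2 ?_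
      rw [integral_mul_const]
      calc (∫ a, g a ∂P) * (1 / (8*c)) ≤ (1 / 2 ^ M) * (1 / (8*c)) := by
            exact mul_le_mul_of_nonneg_right hgint (by positivity)
        _ = 1 / (c * 2 ^ (M+1+2)) := by
            rw [pow_succ, pow_succ, pow_succ]
            field_simp
            ring
    refine ⟨⟨hint1.congr (Filter.Eventually.of_forall fun a => (hsplit a).symm), ?_⟩, ?_⟩
    · calc ∫ a, ∏ k ∈ Finset.Icc 1 (M+1), Φ k a ∂P
          = ∫ a, g a * Φ (M+1) a ∂P := integral_congr_ae (Filter.Eventually.of_forall hsplit)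
        _ ≤ ∫ a, g a * ψ a ∂P := hb1
        _ ≤ 1 / 2 ^ (M+1) := hψint
    · calc ∫ a, (∏ k ∈ Finset.Icc 1 (M+1), Φ k a) * (A (M+1)).indicator (fun _ => (1:ℝ)) a ∂P
          = ∫ a, g a * f' a ∂P := by
            refine integral_congr_ae (Filter.Eventually.of_forall fun a => ?_)
            simp only [hsplit a, hf'def]
            ring
        _ ≤ 1 / (c * 2 ^ (M+1+2)) := hb2'
end
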